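/- (Energy balance, Lemma 4.1.) Suppose x : [0,1] → ℂⁿ is such that w := H·x (that is, w(ζ) = H(ζ)x(ζ)) is continuously differentiable, the boundary condition W_B·(w(1), w(0)) = 0 holds, and set y := W_C·(w(1), w(0)) ∈ ℂⁿ. Then ⟨Ax, x⟩_X + ⟨x, Ax⟩_X = (1/2)·(0, y)* P (0, y) + Re ∫₀¹ w(ζ)* G₀ w(ζ) dζ, where (0, y) ∈ ℂ^{2n} denotes the vector whose first n entries are 0 and last n entries are y. -/

import Mathlib

open Matrix intervalIntegral
open scoped ComplexOrder

/-- The energy inner product `⟨u,v⟩_X := (1/2)∫₀¹ u(ζ)* H(ζ) v(ζ) dζ`. -/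
noncomputable def energyInner {n : ℕ} (H : ℝ → Matrix (Fin n) (Fin n) ℂ)
    (u v : ℝ → Fin n → ℂ) : ℂ :=
  (1 / 2 : ℂ) * ∫ ζ in (0 : ℝ)..1, star (u ζ) ⬝ᵥ ((H ζ) *ᵥ v ζ)

private lemma aux_dot_contOn {n : ℕ} {u v : ℝ → Fin n → ℂ} {s : Set ℝ}
    (hu : ContinuousOn u s) (hv : ContinuousOn v s) :
    ContinuousOn (fun ζ => star (u ζ) ⬝ᵥ v ζ) s := by
  simp only [dotProduct, Pi.star_apply]
  exact continuousOn_finset_sum _ fun i _ =>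
    (((continuous_apply i).comp_continuousOn hu).star).mul
      ((continuous_apply i).comp_continuousOn hv)

private lemma aux_mulVec_contOn {n : ℕ} (M : Matrix (Fin n) (Fin n) ℂ) {u : ℝ → Fin n → ℂ}
    {s : Set ℝ} (hu : ContinuousOn u s) :
    ContinuousOn (fun ζ => M *ᵥ u ζ) s := by
  have h : Continuous (fun v : Fin n → ℂ => M *ᵥ v) := by
    have := (Matrix.mulVecLin M).continuous_of_finiteDimensional
    exact this
  exact h.comp_continuousOn hu

private lemma aux_deriv {n : ℕ} (P₁ : Matrix (Fin n) (Fin n) ℂ) {w w' : ℝ → Fin n → ℂ}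
    (hw' : ∀ ζ ∈ Set.Icc (0 : ℝ) 1, HasDerivWithinAt w (w' ζ) (Set.Icc 0 1) ζ)
    (ζ : ℝ) (hζ : ζ ∈ Set.Icc (0:ℝ) 1) :
    HasDerivWithinAt (fun ζ => star (w ζ) ⬝ᵥ (P₁ *ᵥ w ζ))
      (star (w' ζ) ⬝ᵥ (P₁ *ᵥ w ζ) + star (w ζ) ⬝ᵥ (P₁ *ᵥ w' ζ)) (Set.Icc 0 1) ζ := by
  have hwd : ∀ i, HasDerivWithinAt (fun ζ => w ζ i) (w' ζ i) (Set.Icc 0 1) ζ :=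
    fun i => hasDerivWithinAt_pi.1 (hw' ζ hζ) i
  have h : HasDerivWithinAt (fun ζ => ∑ i, ∑ j, star (w ζ i) * (P₁ i j * w ζ j))
      (∑ i, ∑ j, (star (w' ζ i) * (P₁ i j * w ζ j) + star (w ζ i) * (P₁ i j * w' ζ j)))
      (Set.Icc 0 1) ζ := by
    apply HasDerivWithinAt.fun_sum
    intro i _
    apply HasDerivWithinAt.fun_sum
    intro j _
    exact ((hwd i).star.mul ((hwd j).const_mul _))
  have e1 : (fun ζ => star (w ζ) ⬝ᵥ (P₁ *ᵥ w ζ))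
      = fun ζ => ∑ i, ∑ j, star (w ζ i) * (P₁ i j * w ζ j) := by
    funext ζ; simp [dotProduct, mulVec, Finset.mul_sum]
  rw [e1]
  convert h using 1
  simp [dotProduct, mulVec, Finset.mul_sum, Finset.sum_add_distrib]

private lemma aux_RR {n : ℕ} (P₁ : Matrix (Fin n) (Fin n) ℂ) (hP₁herm : P₁.IsHermitian)
    (R₀ Sig : Matrix (Fin n ⊕ Fin n) (Fin n ⊕ Fin n) ℂ)
    (hR₀ : R₀ = ((Real.sqrt 2 : ℂ))⁻¹ • Matrix.fromBlocks P₁ (-P₁) 1 1)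
    (hSig : Sig = Matrix.fromBlocks 0 1 1 0) :
    R₀ᴴ * Sig * R₀ = Matrix.fromBlocks P₁ 0 0 (-P₁) := by
  have h2 : ((Real.sqrt 2 : ℂ))⁻¹ * ((Real.sqrt 2 : ℂ))⁻¹ = 2⁻¹ := by
    rw [← mul_inv, ← Complex.ofReal_mul, Real.mul_self_sqrt (by norm_num)]
    norm_num
  rw [hR₀, hSig, conjTranspose_smul, Matrix.smul_mul, Matrix.smul_mul, Matrix.mul_smul,
    smul_smul]
  have hst : star (((Real.sqrt 2 : ℝ) : ℂ))⁻¹ = ((Real.sqrt 2 : ℂ))⁻¹ := by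
    simp [Complex.star_def, ← Complex.ofReal_inv]
  rw [hst, h2]
  rw [fromBlocks_conjTranspose, fromBlocks_multiply, fromBlocks_multiply]
  simp only [hP₁herm.eq, conjTranspose_one, conjTranspose_neg, Matrix.mul_one, Matrix.one_mul,
    Matrix.zero_mul, Matrix.mul_zero, zero_add, add_zero, Matrix.neg_mul, Matrix.mul_neg,
    neg_neg]
  ext i j
  rcases i with i | i <;> rcases j with j | j <;>
    simp [Matrix.fromBlocks, Matrix.smul_apply, Matrix.add_apply] <;> ring

private lemma aux_key {n : ℕ} (P₁ : Matrix (Fin n) (Fin n) ℂ)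
    (W_B W_C : Matrix (Fin n) (Fin n ⊕ Fin n) ℂ)
    (W_BC : Matrix (Fin n ⊕ Fin n) (Fin n ⊕ Fin n) ℂ)
    (hW_BC : W_BC = Matrix.fromRows W_B W_C)
    (hW_BCinv : IsUnit W_BC)
    (R₀ Sig P : Matrix (Fin n ⊕ Fin n) (Fin n ⊕ Fin n) ℂ)
    (hRR : R₀ᴴ * Sig * R₀ = Matrix.fromBlocks P₁ 0 0 (-P₁))
    (hP : P = (W_BC⁻¹)ᴴ * R₀ᴴ * Sig * R₀ * W_BC⁻¹)
    (w1 w0 : Fin n → ℂ)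
    (hbdry : W_B *ᵥ Sum.elim w1 w0 = 0)
    (y : Fin n → ℂ) (hy : y = W_C *ᵥ Sum.elim w1 w0) :
    star (Sum.elim (0 : Fin n → ℂ) y) ⬝ᵥ (P *ᵥ Sum.elim (0 : Fin n → ℂ) y)
      = star w1 ⬝ᵥ (P₁ *ᵥ w1) - star w0 ⬝ᵥ (P₁ *ᵥ w0) := by
  have hv : W_BC *ᵥ Sum.elim w1 w0 = Sum.elim (0 : Fin n → ℂ) y := by
    rw [hW_BC, Matrix.fromRows_mulVec, hbdry, hy]
  have hinv : W_BC⁻¹ * W_BC = 1 :=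
    Matrix.nonsing_inv_mul _ ((Matrix.isUnit_iff_isUnit_det _).mp hW_BCinv)
  rw [← hv, hP, Matrix.mulVec_mulVec, star_mulVec, ← dotProduct_mulVec, Matrix.mulVec_mulVec]
  have hm : W_BCᴴ * ((W_BC⁻¹)ᴴ * R₀ᴴ * Sig * R₀ * W_BC⁻¹ * W_BC) = R₀ᴴ * Sig * R₀ := by
    rw [Matrix.mul_assoc ((W_BC⁻¹)ᴴ * R₀ᴴ * Sig * R₀) _ W_BC, hinv, Matrix.mul_one,
      ← Matrix.mul_assoc W_BCᴴ, ← Matrix.mul_assoc W_BCᴴ, ← Matrix.mul_assoc W_BCᴴ,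
      ← conjTranspose_mul, hinv, conjTranspose_one, Matrix.one_mul]
  rw [hm, hRR, Matrix.fromBlocks_mulVec]
  simp only [Sum.elim_comp_inl, Sum.elim_comp_inr, Matrix.zero_mulVec, add_zero, zero_add,
    Matrix.neg_mulVec]
  simp [dotProduct, Fintype.sum_sum_type, Finset.sum_sub_distrib, sub_eq_add_neg,
    Finset.sum_add_distrib, mul_neg]


/-- Energy balance, Lemma 4.1: if `w := H·x` is continuously differentiable,
`W_B (w(1), w(0)) = 0` and `y := W_C (w(1), w(0))`, then, with `(Ax)(ζ) = P₁w′(ζ) + G₀w(ζ)`,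
`⟨Ax, x⟩_X + ⟨x, Ax⟩_X = (1/2)(0,y)* P (0,y) + Re ∫₀¹ w(ζ)* G₀ w(ζ) dζ`. -/
theorem energy_balance
    (n : ℕ) (hn : 0 < n)
    (P₁ : Matrix (Fin n) (Fin n) ℂ) (hP₁herm : P₁.IsHermitian) (hP₁inv : IsUnit P₁)
    (G₀ : Matrix (Fin n) (Fin n) ℂ)
    (H : ℝ → Matrix (Fin n) (Fin n) ℂ)
    (hHcont : ∀ i j, ContinuousOn (fun ζ => H ζ i j) (Set.Icc 0 1))
    (hHherm : ∀ ζ ∈ Set.Icc (0 : ℝ) 1, (H ζ).IsHermitian)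
    (hHpos : ∀ ζ ∈ Set.Icc (0 : ℝ) 1, (H ζ).PosDef)
    (W_B W_C : Matrix (Fin n) (Fin n ⊕ Fin n) ℂ)
    (W_BC : Matrix (Fin n ⊕ Fin n) (Fin n ⊕ Fin n) ℂ)
    (hW_BC : W_BC = Matrix.fromRows W_B W_C)
    (hW_BCinv : IsUnit W_BC)
    (R₀ : Matrix (Fin n ⊕ Fin n) (Fin n ⊕ Fin n) ℂ)
    (hR₀ : R₀ = ((Real.sqrt 2 : ℂ))⁻¹ • Matrix.fromBlocks P₁ (-P₁) 1 1)
    (Sig : Matrix (Fin n ⊕ Fin n) (Fin n ⊕ Fin n) ℂ)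
    (hSig : Sig = Matrix.fromBlocks 0 1 1 0)
    (P : Matrix (Fin n ⊕ Fin n) (Fin n ⊕ Fin n) ℂ)
    (hP : P = (W_BC⁻¹)ᴴ * R₀ᴴ * Sig * R₀ * W_BC⁻¹)
    (x w w' : ℝ → Fin n → ℂ)
    (hw : ∀ ζ ∈ Set.Icc (0 : ℝ) 1, w ζ = (H ζ) *ᵥ x ζ)
    (hw' : ∀ ζ ∈ Set.Icc (0 : ℝ) 1, HasDerivWithinAt w (w' ζ) (Set.Icc 0 1) ζ)
    (hw'cont : ContinuousOn w' (Set.Icc 0 1))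
    (hbdry : W_B *ᵥ Sum.elim (w 1) (w 0) = 0)
    (y : Fin n → ℂ)
    (hy : y = W_C *ᵥ Sum.elim (w 1) (w 0))
    (Ax : ℝ → Fin n → ℂ)
    (hAx : ∀ ζ, Ax ζ = P₁ *ᵥ w' ζ + G₀ *ᵥ w ζ) :
    energyInner H Ax x + energyInner H x Ax =
      (1 / 2 : ℂ) * (star (Sum.elim (0 : Fin n → ℂ) y) ⬝ᵥ (P *ᵥ Sum.elim (0 : Fin n → ℂ) y))
        + ((∫ ζ in (0 : ℝ)..1, star (w ζ) ⬝ᵥ (G₀ *ᵥ w ζ)).re : ℂ) := by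
  have h01 : (0:ℝ) ≤ 1 := zero_le_one
  have huIcc : Set.uIcc (0:ℝ) 1 = Set.Icc 0 1 := Set.uIcc_of_le h01
  have hwcont : ContinuousOn w (Set.Icc 0 1) := fun ζ hζ => (hw' ζ hζ).continuousWithinAt
  have hAxc : ContinuousOn Ax (Set.Icc 0 1) := by
    have : (fun ζ => P₁ *ᵥ w' ζ + G₀ *ᵥ w ζ) = Ax := by funext ζ; rw [hAx]
    rw [← this]
    exact (aux_mulVec_contOn P₁ hw'cont).add (aux_mulVec_contOn G₀ hwcont)
  set Dg : ℝ → ℂ := fun ζ => star (w' ζ) ⬝ᵥ (P₁ *ᵥ w ζ) + star (w ζ) ⬝ᵥ (P₁ *ᵥ w' ζ) with hDg_def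
  set s : ℝ → ℂ := fun ζ => star (w ζ) ⬝ᵥ (G₀ *ᵥ w ζ) with hs_def
  have hDgc : ContinuousOn Dg (Set.Icc 0 1) :=
    (aux_dot_contOn hw'cont (aux_mulVec_contOn P₁ hwcont)).add
      (aux_dot_contOn hwcont (aux_mulVec_contOn P₁ hw'cont))
  have hsc : ContinuousOn s (Set.Icc 0 1) :=
    aux_dot_contOn hwcont (aux_mulVec_contOn G₀ hwcont)
  have hφ₁int : IntervalIntegrable (fun ζ => star (Ax ζ) ⬝ᵥ w ζ) MeasureTheory.volume 0 1 :=
    (huIcc ▸ aux_dot_contOn hAxc hwcont).intervalIntegrable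
  have hφ₂int : IntervalIntegrable (fun ζ => star (w ζ) ⬝ᵥ Ax ζ) MeasureTheory.volume 0 1 :=
    (huIcc ▸ aux_dot_contOn hwcont hAxc).intervalIntegrable
  have hDgint : IntervalIntegrable Dg MeasureTheory.volume 0 1 :=
    (huIcc ▸ hDgc).intervalIntegrable
  have hsint : IntervalIntegrable s MeasureTheory.volume 0 1 :=
    (huIcc ▸ hsc).intervalIntegrable
  have hstarsint : IntervalIntegrable (fun ζ => star (s ζ)) MeasureTheory.volume 0 1 :=
    (huIcc ▸ hsc.star).intervalIntegrable
  -- rewrite the two energy inner products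
  have hE1 : energyInner H Ax x = (1/2 : ℂ) * ∫ ζ in (0:ℝ)..1, star (Ax ζ) ⬝ᵥ w ζ := by
    unfold energyInner
    congr 1
    apply intervalIntegral.integral_congr
    intro ζ hζ
    rw [huIcc] at hζ
    show star (Ax ζ) ⬝ᵥ (H ζ *ᵥ x ζ) = star (Ax ζ) ⬝ᵥ w ζ
    rw [hw ζ hζ]
  have hE2 : energyInner H x Ax = (1/2 : ℂ) * ∫ ζ in (0:ℝ)..1, star (w ζ) ⬝ᵥ Ax ζ := by
    unfold energyInner
    congr 1
    apply intervalIntegral.integral_congr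
    intro ζ hζ
    rw [huIcc] at hζ
    show star (x ζ) ⬝ᵥ (H ζ *ᵥ Ax ζ) = star (w ζ) ⬝ᵥ Ax ζ
    calc star (x ζ) ⬝ᵥ (H ζ *ᵥ Ax ζ) = (star (x ζ) ᵥ* H ζ) ⬝ᵥ Ax ζ := dotProduct_mulVec _ _ _
      _ = (star (x ζ) ᵥ* (H ζ)ᴴ) ⬝ᵥ Ax ζ := by rw [(hHherm ζ hζ).eq]
      _ = star (H ζ *ᵥ x ζ) ⬝ᵥ Ax ζ := by rw [star_mulVec]
      _ = star (w ζ) ⬝ᵥ Ax ζ := by rw [← hw ζ hζ]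
  -- pointwise decomposition of the integrand
  have hsplit : (∫ ζ in (0:ℝ)..1, star (Ax ζ) ⬝ᵥ w ζ) + (∫ ζ in (0:ℝ)..1, star (w ζ) ⬝ᵥ Ax ζ)
      = (∫ ζ in (0:ℝ)..1, Dg ζ)
        + ((∫ ζ in (0:ℝ)..1, star (s ζ)) + ∫ ζ in (0:ℝ)..1, s ζ) := by
    rw [← intervalIntegral.integral_add hφ₁int hφ₂int,
      ← intervalIntegral.integral_add hstarsint hsint,
      ← intervalIntegral.integral_add hDgint (hstarsint.add hsint)]
    apply intervalIntegral.integral_congr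
    intro ζ hζ
    have hstar_s : star (s ζ) = star (w ζ) ⬝ᵥ (G₀ᴴ *ᵥ w ζ) := by
      rw [hs_def]
      rw [← star_dotProduct, star_mulVec, ← dotProduct_mulVec]
    simp only [hDg_def, hstar_s, hAx, star_add, add_dotProduct, dotProduct_add, star_mulVec,
      ← dotProduct_mulVec, hP₁herm.eq]
    ring
  -- FTC
  have hFTC : (∫ ζ in (0:ℝ)..1, Dg ζ)
      = star (w 1) ⬝ᵥ (P₁ *ᵥ w 1) - star (w 0) ⬝ᵥ (P₁ *ᵥ w 0) := by
    apply intervalIntegral.integral_eq_sub_of_hasDeriv_right_of_le h01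
      (aux_dot_contOn hwcont (aux_mulVec_contOn P₁ hwcont)) _ hDgint
    intro t ht
    exact ((aux_deriv P₁ hw' t (Set.mem_Icc_of_Ioo ht)).hasDerivAt
      (Icc_mem_nhds ht.1 ht.2)).hasDerivWithinAt
  -- conjugate of the integral
  have hconj : (∫ ζ in (0:ℝ)..1, star (s ζ)) = star (∫ ζ in (0:ℝ)..1, s ζ) := by
    simp only [RCLike.star_def]
    rw [intervalIntegral.integral_of_le h01, intervalIntegral.integral_of_le h01,
      integral_conj]
  have hkey := aux_key P₁ W_B W_C W_BC hW_BC hW_BCinv R₀ Sig P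
    (aux_RR P₁ hP₁herm R₀ Sig hR₀ hSig) hP (w 1) (w 0) hbdry y hy
  rw [hE1, hE2, ← mul_add, hsplit, hFTC, hconj, hkey]
  have hre : star (∫ ζ in (0:ℝ)..1, s ζ) + (∫ ζ in (0:ℝ)..1, s ζ)
      = ((2 * (∫ ζ in (0:ℝ)..1, s ζ).re : ℝ) : ℂ) := by
    rw [add_comm, RCLike.star_def, Complex.add_conj]
  rw [hre]
  push_cast
  ring
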